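/- Let φ : 𝒳 → Prop be a predicate with P(φ(X)) ≤ ε and P(φ(X_cf) ∧ ¬φ(X)) = γ. For any classifier h : 𝒳 → Bool, there exists a classifier h₂ with P(h(X) ≠ h₂(X)) ≤ ε and influence ι(h₂) = P(h₂(X) ≠ h₂(X_cf)) ≤ 1 - γ/2. -/
import Mathlib


open Finset

noncomputable def Pr {Ω : Type*} [Fintype Ω] (p : Ω → ℝ) (E : Ω → Prop) [DecidablePred E] : ℝ :=
  ∑ ω, if E ω then p ω else 0

lemma Pr_mono {Ω : Type*} [Fintype Ω] (p : Ω → ℝ) (hp : ∀ ω, 0 ≤ p ω)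
    (E F : Ω → Prop) [DecidablePred E] [DecidablePred F] (hEF : ∀ ω, E ω → F ω) :
    Pr p E ≤ Pr p F := by
  apply Finset.sum_le_sum
  intro ω _
  by_cases hE : E ω
  · simp [hE, hEF ω hE]
  · simp [hE]
    split <;> simp [hp ω]

lemma Pr_split {Ω : Type*} [Fintype Ω] (p : Ω → ℝ)
    (E Q : Ω → Prop) [DecidablePred E] [DecidablePred Q] :
    Pr p (fun ω => E ω ∧ Q ω) + Pr p (fun ω => E ω ∧ ¬Q ω) = Pr p E := by
  unfold Pr
  rw [← Finset.sum_add_distrib]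
  apply Finset.sum_congr rfl
  intro ω _
  by_cases hE : E ω <;> by_cases hQ : Q ω <;> simp [hE, hQ]

lemma Pr_not {Ω : Type*} [Fintype Ω] (p : Ω → ℝ) (hsum : ∑ ω, p ω = 1)
    (E : Ω → Prop) [DecidablePred E] :
    Pr p E = 1 - Pr p (fun ω => ¬ E ω) := by
  unfold Pr
  rw [← hsum, eq_sub_iff_add_eq, ← Finset.sum_add_distrib]
  apply Finset.sum_congr rfl
  intro ω _
  by_cases hE : E ω <;> simp [hE]

/-- Other half of Theorem 1: there exists a classifier `h₂` close to `h` on the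
data distribution with influence at most `1 - γ/2`. -/
theorem exists_low_influence {Ω 𝒳 : Type*} [Fintype Ω] [Fintype 𝒳] [DecidableEq 𝒳]
    (p : Ω → ℝ) (hp : ∀ ω, 0 ≤ p ω) (hsum : ∑ ω, p ω = 1)
    (X Xcf : Ω → 𝒳) (φ : 𝒳 → Prop) [DecidablePred φ] (ε γ : ℝ)
    (hε : Pr p (fun ω => φ (X ω)) ≤ ε)
    (hγ : Pr p (fun ω => φ (Xcf ω) ∧ ¬φ (X ω)) = γ)
    (h : 𝒳 → Bool) :
    ∃ h₂ : 𝒳 → Bool,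
      Pr p (fun ω => h (X ω) ≠ h₂ (X ω)) ≤ ε ∧
      Pr p (fun ω => h₂ (X ω) ≠ h₂ (Xcf ω)) ≤ 1 - γ / 2 := by
  classical
  -- split γ-event by the value of h (X ω)
  have hsplit :
      Pr p (fun ω => (φ (Xcf ω) ∧ ¬φ (X ω)) ∧ h (X ω) = true) +
      Pr p (fun ω => (φ (Xcf ω) ∧ ¬φ (X ω)) ∧ ¬(h (X ω) = true)) = γ := by
    rw [Pr_split p (fun ω => φ (Xcf ω) ∧ ¬φ (X ω)) (fun ω => h (X ω) = true), hγ]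
  have key : ∀ b : Bool,
      γ / 2 ≤ Pr p (fun ω => (φ (Xcf ω) ∧ ¬φ (X ω)) ∧ h (X ω) = b) →
      ∃ h₂ : 𝒳 → Bool,
        Pr p (fun ω => h (X ω) ≠ h₂ (X ω)) ≤ ε ∧
        Pr p (fun ω => h₂ (X ω) ≠ h₂ (Xcf ω)) ≤ 1 - γ / 2 := by
    intro b hb
    refine ⟨fun x => if φ x then b else h x, ?_, ?_⟩
    · refine le_trans (Pr_mono p hp _ _ ?_) hε
      intro ω hω
      by_contra hφ
      exact hω (by simp [hφ])
    · rw [Pr_not p hsum]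
      have : Pr p (fun ω => (φ (Xcf ω) ∧ ¬φ (X ω)) ∧ h (X ω) = b) ≤
          Pr p (fun ω => ¬((fun x => if φ x then b else h x) (X ω) ≠
            (fun x => if φ x then b else h x) (Xcf ω))) := by
        apply Pr_mono p hp
        rintro ω ⟨⟨hcf, hx⟩, hb'⟩
        simp [hcf, hx, hb']
      linarith
  rcases le_or_gt (γ / 2) (Pr p (fun ω => (φ (Xcf ω) ∧ ¬φ (X ω)) ∧ h (X ω) = true)) with hc | hc
  · exact key true hc
  · apply key false
    have : ∀ ω, (¬(h (X ω) = true)) ↔ (h (X ω) = false) := by intro ω; cases h (X ω) <;> simp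
    have heq : Pr p (fun ω => (φ (Xcf ω) ∧ ¬φ (X ω)) ∧ ¬(h (X ω) = true)) =
        Pr p (fun ω => (φ (Xcf ω) ∧ ¬φ (X ω)) ∧ h (X ω) = false) := by
      unfold Pr
      apply Finset.sum_congr rfl
      intro ω _
      simp [this ω]
    linarith
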